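/- Define f(σ) = exp(-d1(V,K₁,σ)²/2) - exp(-d1(V,K₂,σ)²/2) for σ > 0, with 0 < K₁ < K₂, V, T > 0, r real. If V < V* := exp(-rT)·√(K₁·K₂), then f(σ) > 0 for 0 < σ < σ_max and f(σ) < 0 for σ > σ_max, where σ_max = √((1/T)·ln(K₁K₂/V²) - 2r). (Thus the vega of the junior-debt bull spread changes sign exactly once, from positive to negative, at σ_max.) -/

import Mathlib

set_option maxHeartbeats 1000000


/-- the vega f(σ) of the junior-debt bull spread changes sign
exactly once, from positive to negative, at σ_max, when V < V*. -/
theorem stmt_4 (V K₁ K₂ r T : ℝ) (hV : 0 < V) (hK₁ : 0 < K₁) (hK₂ : 0 < K₂)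
    (hT : 0 < T) (hK : K₁ < K₂)
    (hVstar : V < Real.exp (-r * T) * Real.sqrt (K₁ * K₂))
    (f : ℝ → ℝ)
    (hf : ∀ σ : ℝ, f σ =
      Real.exp (-(((Real.log (V / K₁) + (r + σ ^ 2 / 2) * T) / (σ * Real.sqrt T)) ^ 2) / 2)
        - Real.exp (-(((Real.log (V / K₂) + (r + σ ^ 2 / 2) * T) / (σ * Real.sqrt T)) ^ 2) / 2)) :
    (∀ σ : ℝ, 0 < σ →
        σ < Real.sqrt ((1 / T) * Real.log (K₁ * K₂ / V ^ 2) - 2 * r) → f σ > 0)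
    ∧ (∀ σ : ℝ,
        σ > Real.sqrt ((1 / T) * Real.log (K₁ * K₂ / V ^ 2) - 2 * r) → f σ < 0) := by
  have hVK : 0 < K₁ * K₂ := mul_pos hK₁ hK₂
  have hsT : 0 < Real.sqrt T := Real.sqrt_pos.mpr hT
  have hlogV : Real.log V < Real.log (Real.exp (-r * T) * Real.sqrt (K₁ * K₂)) :=
    Real.log_lt_log hV hVstar
  have hlogrhs : Real.log (Real.exp (-r * T) * Real.sqrt (K₁ * K₂))
      = -r * T + (Real.log K₁ + Real.log K₂) / 2 := by
    rw [Real.log_mul (Real.exp_ne_zero _) (by positivity), Real.log_exp,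
      Real.log_sqrt hVK.le, Real.log_mul hK₁.ne' hK₂.ne']
  have hlogA : Real.log (K₁ * K₂ / V ^ 2)
      = Real.log K₁ + Real.log K₂ - 2 * Real.log V := by
    rw [Real.log_div hVK.ne' (by positivity), Real.log_mul hK₁.ne' hK₂.ne',
      Real.log_pow]
    push_cast; ring
  set A := (1 / T) * Real.log (K₁ * K₂ / V ^ 2) - 2 * r with hA
  have hX : 0 < Real.log K₁ + Real.log K₂ - 2 * Real.log V - 2 * r * T := by
    rw [hlogrhs] at hlogV; linarith
  have hAeq : A = (1 / T) * (Real.log K₁ + Real.log K₂ - 2 * Real.log V - 2 * r * T) := by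
    rw [hA, hlogA]; field_simp
  have hApos : 0 < A := by
    rw [hAeq]; exact mul_pos (by positivity) hX
  have hAT : A * T = Real.log K₁ + Real.log K₂ - 2 * Real.log V - 2 * r * T := by
    rw [hAeq]; field_simp
  have hL₁ : Real.log (V / K₁) = Real.log V - Real.log K₁ := Real.log_div hV.ne' hK₁.ne'
  have hL₂ : Real.log (V / K₂) = Real.log V - Real.log K₂ := Real.log_div hV.ne' hK₂.ne'
  have hKlog : Real.log K₁ < Real.log K₂ := Real.log_lt_log hK₁ hK
  have key : ∀ σ : ℝ, 0 < σ →
      ((σ ^ 2 < A → 0 < f σ) ∧ (A < σ ^ 2 → f σ < 0)) := by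
    intro σ hσ
    have hs : 0 < σ * Real.sqrt T := mul_pos hσ hsT
    have hs2 : 0 < (σ * Real.sqrt T) ^ 2 := by positivity
    have hfσ := hf σ
    set c := (r + σ ^ 2 / 2) * T with hc
    set L₁ := Real.log (V / K₁)
    set L₂ := Real.log (V / K₂)
    have hLlt : L₂ < L₁ := by rw [hL₁, hL₂]; linarith
    constructor
    · intro hlt
      have hTA : σ ^ 2 * T < A * T := by
        exact mul_lt_mul_of_pos_right hlt hT
      have hsum : L₁ + L₂ + 2 * c < 0 := by
        rw [hL₁, hL₂, hc]; rw [hAT] at hTA; linarith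
      have hsq : ((L₁ + c) / (σ * Real.sqrt T)) ^ 2
          < ((L₂ + c) / (σ * Real.sqrt T)) ^ 2 := by
        rw [div_pow, div_pow, div_lt_div_iff₀ hs2 hs2]
        have h : (L₁ + c) ^ 2 < (L₂ + c) ^ 2 := by
          nlinarith [mul_pos (sub_pos.mpr hLlt) (by linarith : (0:ℝ) < -(L₁ + L₂ + 2 * c))]
        exact mul_lt_mul_of_pos_right h hs2
      rw [hfσ]
      have := Real.exp_lt_exp.mpr
        (by linarith : -(((L₂ + c) / (σ * Real.sqrt T)) ^ 2) / 2
          < -(((L₁ + c) / (σ * Real.sqrt T)) ^ 2) / 2)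
      linarith
    · intro hgt
      have hTA : A * T < σ ^ 2 * T := mul_lt_mul_of_pos_right hgt hT
      have hsum : 0 < L₁ + L₂ + 2 * c := by
        rw [hL₁, hL₂, hc]; rw [hAT] at hTA; linarith
      have hsq : ((L₂ + c) / (σ * Real.sqrt T)) ^ 2
          < ((L₁ + c) / (σ * Real.sqrt T)) ^ 2 := by
        rw [div_pow, div_pow, div_lt_div_iff₀ hs2 hs2]
        have h : (L₂ + c) ^ 2 < (L₁ + c) ^ 2 := by
          nlinarith [mul_pos (sub_pos.mpr hLlt) hsum]
        exact mul_lt_mul_of_pos_right h hs2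
      rw [hfσ]
      have := Real.exp_lt_exp.mpr
        (by linarith : -(((L₁ + c) / (σ * Real.sqrt T)) ^ 2) / 2
          < -(((L₂ + c) / (σ * Real.sqrt T)) ^ 2) / 2)
      linarith
  constructor
  · intro σ hσ hlt
    exact (key σ hσ).1 ((Real.lt_sqrt hσ.le).mp hlt)
  · intro σ hgt
    have hσ : 0 < σ := lt_trans (Real.sqrt_pos.mpr hApos) hgt
    exact (key σ hσ).2 ((Real.sqrt_lt' hσ).mp hgt)
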